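/- Let X be a finite-dimensional Banach space with numerical radius a norm on L(X), T ∈ L(X)_w and V a subspace of L(X)_w. Suppose there exists S ∈ V with w(T − S) = d_w(T, V) such that T − S is nu-smooth. Then d_w(T, V) = max{ x*(Tx) : x ∈ E_X, x* ∈ E_{X*}, |x*(x)| = 1, Im(x*(Tx)) = 0, and x*(Ax) = 0 for all A ∈ V }. -/

import Mathlib

variable {𝕜 : Type*} [RCLike 𝕜] {X : Type*} [NormedAddCommGroup X] [NormedSpace 𝕜 X]

/-- The numerical radius of a bounded linear operator on a Banach space. -/
noncomputable def nrad (T : X →L[𝕜] X) : ℝ :=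
  sSup {r : ℝ | ∃ (x : X) (f : X →L[𝕜] 𝕜), ‖x‖ = 1 ∧ ‖f‖ = 1 ∧ f x = 1 ∧ r = ‖f (T x)‖}

/-- The functional `x* ⊗ x : T ↦ x*(Tx)` on `L(X)`. -/
noncomputable def tensor (f : X →L[𝕜] 𝕜) (x : X) : (X →L[𝕜] X) →L[𝕜] 𝕜 :=
  f.comp (ContinuousLinearMap.apply 𝕜 X x)

/-- The dual norm induced on functionals by the numerical radius norm. -/
noncomputable def wdual (g : (X →L[𝕜] X) →L[𝕜] 𝕜) : ℝ :=
  sSup {r : ℝ | ∃ T : X →L[𝕜] X, nrad T ≤ 1 ∧ r = ‖g T‖}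

/-- The set `J_w(T)` of norm-one supporting functionals of `T` in `(L(X)_w)*`. -/
noncomputable def Jw (T : X →L[𝕜] X) : Set ((X →L[𝕜] X) →L[𝕜] 𝕜) :=
  {g | wdual g = 1 ∧ g T = (nrad T : 𝕜)}

/-- The numerical radius attainment set `M_{w(T)}`. -/
noncomputable def Mw (T : X →L[𝕜] X) : Set (X × (X →L[𝕜] 𝕜)) :=
  {p | ‖p.1‖ = 1 ∧ ‖p.2‖ = 1 ∧ p.2 p.1 = 1 ∧ ‖p.2 (T p.1)‖ = nrad T}

/-- The distance of `T` from `V` equals the maximum of `w(T − S)`-distance formula. -/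
noncomputable def dw {X : Type*} [NormedAddCommGroup X] [NormedSpace 𝕜 X]
    (T : X →L[𝕜] X) (V : Submodule 𝕜 (X →L[𝕜] X)) : ℝ :=
  sInf {r : ℝ | ∃ S ∈ V, r = nrad (T - S)}

namespace NradAux

def nradSet (T : X →L[𝕜] X) : Set ℝ :=
  {r : ℝ | ∃ (x : X) (f : X →L[𝕜] 𝕜), ‖x‖ = 1 ∧ ‖f‖ = 1 ∧ f x = 1 ∧ r = ‖f (T x)‖}

lemma nrad_eq (T : X →L[𝕜] X) : nrad T = sSup (nradSet T) := rfl

lemma nradSet_bddAbove (T : X →L[𝕜] X) : BddAbove (nradSet T) := by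
  refine ⟨‖T‖, ?_⟩
  rintro r ⟨x, f, hx, hf, _, rfl⟩
  calc ‖f (T x)‖ ≤ ‖f‖ * ‖T x‖ := f.le_opNorm _
    _ ≤ ‖f‖ * (‖T‖ * ‖x‖) := by gcongr; exact T.le_opNorm _
    _ = ‖T‖ := by rw [hx, hf]; ring

lemma pair_le_nrad {T : X →L[𝕜] X} {x : X} {f : X →L[𝕜] 𝕜}
    (hx : ‖x‖ = 1) (hf : ‖f‖ = 1) (hfx : f x = 1) : ‖f (T x)‖ ≤ nrad T :=
  le_csSup (nradSet_bddAbove T) ⟨x, f, hx, hf, hfx, rfl⟩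

lemma exists_pair [Nontrivial X] :
    ∃ (x : X) (f : X →L[𝕜] 𝕜), ‖x‖ = 1 ∧ ‖f‖ = 1 ∧ f x = 1 := by
  obtain ⟨x0, hx0⟩ := exists_ne (0 : X)
  set x : X := (‖x0‖⁻¹ : 𝕜) • x0 with hxdef
  have hx : ‖x‖ = 1 := by
    rw [hxdef, norm_smul]
    simp [norm_inv, hx0, norm_ne_zero_iff.2 hx0]
  obtain ⟨f, hf1, hfx⟩ := exists_dual_vector 𝕜 x (by
    intro h; rw [h] at hx; simp at hx)
  exact ⟨x, f, hx, hf1, by rw [hfx, hx]; norm_num⟩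

lemma nradSet_nonempty [Nontrivial X] (T : X →L[𝕜] X) : (nradSet T).Nonempty := by
  obtain ⟨x, f, hx, hf, hfx⟩ := exists_pair (𝕜 := 𝕜) (X := X)
  exact ⟨_, x, f, hx, hf, hfx, rfl⟩

lemma nrad_nonneg [Nontrivial X] (T : X →L[𝕜] X) : 0 ≤ nrad T := by
  obtain ⟨x, f, hx, hf, hfx⟩ := exists_pair (𝕜 := 𝕜) (X := X)
  exact le_trans (norm_nonneg _) (pair_le_nrad hx hf hfx)

lemma nrad_zero : nrad (0 : X →L[𝕜] X) = 0 := by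
  have hsub : nradSet (0 : X →L[𝕜] X) ⊆ {0} := by
    rintro r ⟨x, f, _, _, _, rfl⟩; simp
  rcases Set.eq_empty_or_nonempty (nradSet (0 : X →L[𝕜] X)) with h | h
  · rw [nrad_eq, h, Real.sSup_empty]
  · rw [nrad_eq, Set.Nonempty.subset_singleton_iff h |>.mp hsub, csSup_singleton]

lemma nrad_smul [Nontrivial X] (c : 𝕜) (T : X →L[𝕜] X) :
    nrad (c • T) = ‖c‖ * nrad T := by
  have key : ∀ (c : 𝕜) (T : X →L[𝕜] X), nrad (c • T) ≤ ‖c‖ * nrad T := by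
    intro c T
    refine csSup_le (nradSet_nonempty _) ?_
    rintro r ⟨x, f, hx, hf, hfx, rfl⟩
    have : ‖f ((c • T) x)‖ = ‖c‖ * ‖f (T x)‖ := by
      simp [norm_smul]
    rw [this]
    exact mul_le_mul_of_nonneg_left (pair_le_nrad hx hf hfx) (norm_nonneg c)
  rcases eq_or_ne c 0 with rfl | hc
  · simp [nrad_zero]
  · refine le_antisymm (key c T) ?_
    have h2 := key c⁻¹ (c • T)
    rw [inv_smul_smul₀ hc] at h2
    rw [norm_inv] at h2
    have hcpos : (0:ℝ) < ‖c‖ := norm_pos_iff.2 hc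
    calc ‖c‖ * nrad T ≤ ‖c‖ * (‖c‖⁻¹ * nrad (c • T)) := by gcongr
      _ = nrad (c • T) := by field_simp

lemma nrad_neg (T : X →L[𝕜] X) : nrad (-T) = nrad T := by
  have h : ∀ T : X →L[𝕜] X, nradSet (-T) = nradSet T := by
    intro T; ext r
    constructor <;> rintro ⟨x, f, hx, hf, hfx, rfl⟩ <;>
      exact ⟨x, f, hx, hf, hfx, by simp⟩
  rw [nrad_eq, nrad_eq, h]

lemma nrad_add_le [Nontrivial X] (A B : X →L[𝕜] X) :
    nrad (A + B) ≤ nrad A + nrad B := by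
  refine csSup_le (nradSet_nonempty _) ?_
  rintro r ⟨x, f, hx, hf, hfx, rfl⟩
  calc ‖f ((A + B) x)‖ = ‖f (A x) + f (B x)‖ := by simp
    _ ≤ ‖f (A x)‖ + ‖f (B x)‖ := norm_add_le _ _
    _ ≤ nrad A + nrad B := add_le_add (pair_le_nrad hx hf hfx) (pair_le_nrad hx hf hfx)


lemma disc_extreme {a b : ℝ} (ha : 0 < a) (hb : 0 < b) (hab : a + b = 1)
    {c : ℝ} {u v : 𝕜} (hu : ‖u‖ ≤ c) (hv : ‖v‖ ≤ c)
    (h : (a : 𝕜) * u + (b : 𝕜) * v = (c : 𝕜)) : u = (c : 𝕜) ∧ v = (c : 𝕜) := by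
  have hc : 0 ≤ c := le_trans (norm_nonneg u) hu
  have hre : a * RCLike.re u + b * RCLike.re v = c := by
    have := congrArg (RCLike.re (K := 𝕜)) h
    simpa [RCLike.ofReal_re] using this
  have hru : RCLike.re u ≤ c := le_trans (RCLike.re_le_norm u) hu
  have hrv : RCLike.re v ≤ c := le_trans (RCLike.re_le_norm v) hv
  have hru' : RCLike.re u = c := by
    by_contra hne
    have h1 : RCLike.re u < c := lt_of_le_of_ne hru hne
    have : a * RCLike.re u + b * RCLike.re v < a * c + b * c := by
      apply add_lt_add_of_lt_of_le
      · exact mul_lt_mul_of_pos_left h1 ha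
      · exact mul_le_mul_of_nonneg_left hrv hb.le
    rw [hre] at this
    nlinarith
  have hrv' : RCLike.re v = c := by nlinarith
  have key : ∀ w : 𝕜, ‖w‖ ≤ c → RCLike.re w = c → w = (c : 𝕜) := by
    intro w hw hwre
    have h2 : ‖w‖ ^ 2 = RCLike.re w * RCLike.re w + RCLike.im w * RCLike.im w :=
      RCLike.norm_sq_eq_def
    have h3 : ‖w‖ ^ 2 ≤ c ^ 2 := by nlinarith [norm_nonneg w]
    have him : RCLike.im w = 0 := by nlinarith
    apply RCLike.ext <;> simp [hwre, him]
  exact ⟨key u hu hru', key v hv hrv'⟩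

lemma nrad_attained [FiniteDimensional 𝕜 X] [Nontrivial X] (T : X →L[𝕜] X) :
    ∃ (x : X) (f : X →L[𝕜] 𝕜), ‖x‖ = 1 ∧ ‖f‖ = 1 ∧ f x = 1 ∧ ‖f (T x)‖ = nrad T := by
  classical
  set K : Set (X × (X →L[𝕜] 𝕜)) := {p | ‖p.1‖ = 1 ∧ ‖p.2‖ = 1 ∧ p.2 p.1 = 1} with hK
  have hKc : IsCompact K := by
    have hclosed : IsClosed K := by
      have h1 : IsClosed {p : X × (X →L[𝕜] 𝕜) | ‖p.1‖ = 1} :=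
        isClosed_eq (continuous_norm.comp continuous_fst) continuous_const
      have h2 : IsClosed {p : X × (X →L[𝕜] 𝕜) | ‖p.2‖ = 1} :=
        isClosed_eq (continuous_norm.comp continuous_snd) continuous_const
      have h3 : IsClosed {p : X × (X →L[𝕜] 𝕜) | p.2 p.1 = 1} := by
        have hcont : Continuous fun p : X × (X →L[𝕜] 𝕜) => p.2 p.1 := by
          exact isBoundedBilinearMap_apply.continuous.comp (continuous_snd.prodMk continuous_fst)
        exact isClosed_eq hcont continuous_const
      simp only [hK, Set.setOf_and]
      exact h1.inter (h2.inter h3)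
    have hbdd : Bornology.IsBounded K := by
      have : K ⊆ Metric.closedBall 0 1 ×ˢ Metric.closedBall 0 1 := by
        rintro ⟨x, f⟩ ⟨hx, hf, _⟩
        exact ⟨by simpa [Metric.mem_closedBall] using hx.le, by
          simpa [Metric.mem_closedBall] using hf.le⟩
      exact (Metric.isBounded_closedBall.prod Metric.isBounded_closedBall).subset this
    haveI : FiniteDimensional 𝕜 (X →L[𝕜] 𝕜) := inferInstance
    haveI : ProperSpace (X × (X →L[𝕜] 𝕜)) := FiniteDimensional.proper 𝕜 _
    exact Metric.isCompact_of_isClosed_isBounded hclosed hbdd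
  have hKne : K.Nonempty := by
    obtain ⟨x, f, hx, hf, hfx⟩ := exists_pair (𝕜 := 𝕜) (X := X)
    exact ⟨⟨x, f⟩, hx, hf, hfx⟩
  set φ : X × (X →L[𝕜] 𝕜) → ℝ := fun p => ‖p.2 (T p.1)‖ with hφ
  have hφc : Continuous φ := by
    apply continuous_norm.comp
    exact isBoundedBilinearMap_apply.continuous.comp
      ((continuous_snd.prodMk ((T.continuous).comp continuous_fst)))
  have himg : nradSet T = φ '' K := by
    ext r
    constructor
    · rintro ⟨x, f, hx, hf, hfx, rfl⟩; exact ⟨⟨x, f⟩, ⟨hx, hf, hfx⟩, rfl⟩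
    · rintro ⟨⟨x, f⟩, ⟨hx, hf, hfx⟩, rfl⟩; exact ⟨x, f, hx, hf, hfx, rfl⟩
  have himgc : IsCompact (φ '' K) := hKc.image hφc
  have hmem : sSup (φ '' K) ∈ φ '' K :=
    himgc.sSup_mem (hKne.image φ)
  rw [nrad_eq, himg]
  obtain ⟨⟨x, f⟩, ⟨hx, hf, hfx⟩, heq⟩ := hmem
  exact ⟨x, f, hx, hf, hfx, heq⟩



lemma tensor_apply (f : X →L[𝕜] 𝕜) (x : X) (A : X →L[𝕜] X) :
    tensor f x A = f (A x) := rfl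

def wdualSet (g : (X →L[𝕜] X) →L[𝕜] 𝕜) : Set ℝ :=
  {r : ℝ | ∃ T : X →L[𝕜] X, nrad T ≤ 1 ∧ r = ‖g T‖}

lemma wdual_eq (g : (X →L[𝕜] X) →L[𝕜] 𝕜) : wdual g = sSup (wdualSet g) := rfl

lemma wdualSet_zero_mem (g : (X →L[𝕜] X) →L[𝕜] 𝕜) : (0 : ℝ) ∈ wdualSet g :=
  ⟨0, by rw [nrad_zero]; exact zero_le_one, by simp⟩

lemma wdual_eq_one_of {g : (X →L[𝕜] X) →L[𝕜] 𝕜}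
    (hle : ∀ A : X →L[𝕜] X, nrad A ≤ 1 → ‖g A‖ ≤ 1)
    (hex : ∃ A : X →L[𝕜] X, nrad A ≤ 1 ∧ ‖g A‖ = 1) : wdual g = 1 := by
  have hbdd : ∀ r ∈ wdualSet g, r ≤ 1 := by
    rintro r ⟨A, hA, rfl⟩; exact hle A hA
  refine le_antisymm (csSup_le ⟨0, wdualSet_zero_mem g⟩ hbdd) ?_
  obtain ⟨A, hA, hval⟩ := hex
  exact le_csSup ⟨1, hbdd⟩ ⟨A, hA, hval.symm⟩

lemma wdual_zero : wdual (0 : (X →L[𝕜] X) →L[𝕜] 𝕜) = 0 := by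
  have : wdualSet (0 : (X →L[𝕜] X) →L[𝕜] 𝕜) = {0} := by
    apply Set.eq_singleton_iff_unique_mem.2
    exact ⟨wdualSet_zero_mem 0, by rintro r ⟨A, hA, rfl⟩; simp⟩
  rw [wdual_eq, this, csSup_singleton]

lemma wdual_neg (g : (X →L[𝕜] X) →L[𝕜] 𝕜) : wdual (-g) = wdual g := by
  have : wdualSet (-g) = wdualSet g := by
    ext r
    constructor <;> rintro ⟨A, hA, rfl⟩ <;> exact ⟨A, hA, by simp⟩
  rw [wdual_eq, wdual_eq, this]

lemma tensor_mem_Jw [Nontrivial X] {T₀ : X →L[𝕜] X} {x : X} {xs f : X →L[𝕜] 𝕜} {lam : 𝕜}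
    (hx : ‖x‖ = 1) (hxs : ‖xs‖ = 1) (hxsx : xs x = 1) (hlam : ‖lam‖ = 1) (hf : f = lam • xs)
    (hd : 0 < nrad T₀) (hval : f (T₀ x) = ((nrad T₀ : ℝ) : 𝕜)) : tensor f x ∈ Jw T₀ := by
  constructor
  · apply wdual_eq_one_of
    · intro A hA
      rw [tensor_apply, hf]
      have : ‖(lam • xs) (A x)‖ = ‖xs (A x)‖ := by
        simp [norm_smul, hlam]
      rw [this]
      exact le_trans (pair_le_nrad hx hxs hxsx) hA
    · refine ⟨(((nrad T₀)⁻¹ : ℝ) : 𝕜) • T₀, ?_, ?_⟩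
      · rw [nrad_smul]
        rw [RCLike.norm_ofReal, abs_of_pos (inv_pos.2 hd), inv_mul_cancel₀ hd.ne']
      · rw [tensor_apply]
        have : ((((nrad T₀)⁻¹ : ℝ) : 𝕜) • T₀) x = (((nrad T₀)⁻¹ : ℝ) : 𝕜) • (T₀ x) := rfl
        rw [this, map_smul, smul_eq_mul, hval, norm_mul, RCLike.norm_ofReal, RCLike.norm_ofReal,
          abs_of_pos (inv_pos.2 hd), abs_of_pos hd, inv_mul_cancel₀ hd.ne']
  · rw [tensor_apply]
    exact hval


def WSpace (𝕜 X : Type*) [RCLike 𝕜] [NormedAddCommGroup X] [NormedSpace 𝕜 X] : Type _ :=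
  X →L[𝕜] X

lemma exists_annihilator [FiniteDimensional 𝕜 X] [Nontrivial X]
    (hw : ∀ T : X →L[𝕜] X, nrad T = 0 → T = 0)
    (V : Submodule 𝕜 (X →L[𝕜] X)) (T₀ : X →L[𝕜] X) (hd : 0 < nrad T₀)
    (hlb : ∀ B ∈ V, nrad T₀ ≤ nrad (T₀ - B)) :
    ∃ G : (X →L[𝕜] X) →L[𝕜] 𝕜, (∀ A : X →L[𝕜] X, ‖G A‖ ≤ nrad A) ∧
      (∀ A ∈ V, G A = 0) ∧ G T₀ = ((nrad T₀ : ℝ) : 𝕜) := by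
  classical
  set d : ℝ := nrad T₀ with hdd
  have hT₀V : T₀ ∉ V := by
    intro h
    have := hlb T₀ h
    rw [sub_self, nrad_zero] at this
    exact absurd this (not_le.2 hd)
  -- a linear functional vanishing on V with value d at T₀
  have hmkT₀ : Submodule.Quotient.mk (p := V) T₀ ≠ 0 := by
    simpa [Submodule.Quotient.mk_eq_zero] using hT₀V
  have hψex : ∃ ψ : Module.Dual 𝕜 ((X →L[𝕜] X) ⧸ V), ψ (Submodule.Quotient.mk T₀) ≠ 0 := by
    by_contra hcon
    push_neg at hcon
    exact hmkT₀ ((Module.forall_dual_apply_eq_zero_iff 𝕜 _).1 hcon)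
  obtain ⟨ψ, hψ⟩ := hψex
  set h₀ : (X →L[𝕜] X) →ₗ[𝕜] 𝕜 :=
    (((d : 𝕜) * (ψ (Submodule.Quotient.mk T₀))⁻¹) • (ψ.comp V.mkQ)) with hh₀
  have hh₀V : ∀ A ∈ V, h₀ A = 0 := by
    intro A hA
    simp [hh₀, (Submodule.Quotient.mk_eq_zero V).2 hA]
  have hh₀T₀ : h₀ T₀ = (d : 𝕜) := by
    simp only [hh₀, LinearMap.smul_apply, LinearMap.comp_apply, Submodule.mkQ_apply,
      smul_eq_mul]
    field_simp
  -- the renormed space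
  letI : AddCommGroup (WSpace 𝕜 X) := inferInstanceAs (AddCommGroup (X →L[𝕜] X))
  letI : Module 𝕜 (WSpace 𝕜 X) := inferInstanceAs (Module 𝕜 (X →L[𝕜] X))
  letI : NormedAddCommGroup (WSpace 𝕜 X) := AddGroupNorm.toNormedAddCommGroup
    { toFun := fun A => nrad (show X →L[𝕜] X from A)
      map_zero' := nrad_zero
      add_le' := fun A B => nrad_add_le A B
      neg' := fun A => by exact nrad_neg (show X →L[𝕜] X from A)
      eq_zero_of_map_eq_zero' := fun A h => hw _ h }
  letI : NormedSpace 𝕜 (WSpace 𝕜 X) := ⟨fun c A => le_of_eq (nrad_smul c A)⟩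
  set e : (X →L[𝕜] X) ≃ₗ[𝕜] WSpace 𝕜 X :=
    { toFun := fun A => A
      map_add' := fun _ _ => rfl
      map_smul' := fun _ _ => rfl
      invFun := fun A => A
      left_inv := fun _ => rfl
      right_inv := fun _ => rfl } with he
  letI : FiniteDimensional 𝕜 (WSpace 𝕜 X) := Module.Finite.equiv e
  set W : Submodule 𝕜 (WSpace 𝕜 X) :=
    (V ⊔ Submodule.span 𝕜 {T₀}).map e.toLinearMap with hW
  have hWnorm : ∀ w : WSpace 𝕜 X, ‖w‖ = nrad (show X →L[𝕜] X from w) := fun _ => rfl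
  set fW0 : W →ₗ[𝕜] 𝕜 := h₀.comp (e.symm.toLinearMap.comp W.subtype) with hfW0
  set fW : W →L[𝕜] 𝕜 := LinearMap.toContinuousLinearMap fW0 with hfW
  have hdecomp : ∀ w : W, ∃ (A : X →L[𝕜] X) (c : 𝕜), A ∈ V ∧
      (w : WSpace 𝕜 X) = e (A + c • T₀) := by
    rintro ⟨w, hwmem⟩
    rw [hW, Submodule.mem_map] at hwmem
    obtain ⟨B, hB, rfl⟩ := hwmem
    rw [Submodule.mem_sup] at hB
    obtain ⟨A, hA, B', hB', rfl⟩ := hB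
    rw [Submodule.mem_span_singleton] at hB'
    obtain ⟨c, rfl⟩ := hB'
    exact ⟨A, c, hA, rfl⟩
  have hval : ∀ (A : X →L[𝕜] X) (c : 𝕜), A ∈ V → h₀ (A + c • T₀) = c * (d : 𝕜) := by
    intro A c hA
    rw [map_add, hh₀V A hA, map_smul, hh₀T₀, zero_add, smul_eq_mul]
  have hnormbd : ∀ (A : X →L[𝕜] X) (c : 𝕜), A ∈ V → ‖c‖ * d ≤ nrad (A + c • T₀) := by
    intro A c hA
    rcases eq_or_ne c 0 with rfl | hc
    · simpa using nrad_nonneg (A + (0:𝕜) • T₀)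
    · have key : A + c • T₀ = c • (T₀ - (-(c⁻¹ • A))) := by
        rw [smul_sub, smul_neg, smul_smul, mul_inv_cancel₀ hc, one_smul, sub_neg_eq_add,
          add_comm]
      rw [key, nrad_smul]
      have : T₀ - (-(c⁻¹ • A)) = T₀ - (-(c⁻¹) • A) := by rw [neg_smul]
      gcongr
      rw [this]
      exact hlb _ (V.smul_mem _ hA)
  have hfWle : ‖fW‖ ≤ 1 := by
    apply ContinuousLinearMap.opNorm_le_bound _ zero_le_one
    intro w
    obtain ⟨A, c, hA, hw⟩ := hdecomp w
    have h1 : fW w = c * (d : 𝕜) := by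
      have : fW w = h₀ (e.symm (w : WSpace 𝕜 X)) := rfl
      rw [this, hw, e.symm_apply_apply, hval A c hA]
    have h2 : ‖(w : WSpace 𝕜 X)‖ = nrad (A + c • T₀) := by
      rw [hw]; rfl
    rw [h1, one_mul]
    show ‖c * (d:𝕜)‖ ≤ ‖w‖
    have : ‖(w : W)‖ = ‖(w : WSpace 𝕜 X)‖ := rfl
    rw [this, h2, norm_mul, RCLike.norm_ofReal, abs_of_pos hd]
    exact hnormbd A c hA
  obtain ⟨g', hg'ext, hg'norm⟩ := exists_extension_norm_eq (𝕜 := 𝕜) W fW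
  set G0 : (X →L[𝕜] X) →ₗ[𝕜] 𝕜 := g'.toLinearMap.comp e.toLinearMap with hG0
  set G : (X →L[𝕜] X) →L[𝕜] 𝕜 := LinearMap.toContinuousLinearMap G0 with hG
  have hGapp : ∀ A : X →L[𝕜] X, G A = g' (e A) := fun _ => rfl
  refine ⟨G, ?_, ?_, ?_⟩
  · intro A
    rw [hGapp]
    calc ‖g' (e A)‖ ≤ ‖g'‖ * ‖e A‖ := g'.le_opNorm _
      _ ≤ 1 * ‖e A‖ := by
          apply mul_le_mul_of_nonneg_right _ (norm_nonneg _)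
          rw [hg'norm]; exact hfWle
      _ = nrad A := by rw [one_mul]; rfl
  · intro A hA
    have hmem : e A ∈ W := Submodule.mem_map_of_mem (Submodule.mem_sup_left hA)
    have := hg'ext ⟨e A, hmem⟩
    rw [hGapp]
    rw [show ((⟨e A, hmem⟩ : W) : WSpace 𝕜 X) = e A from rfl] at this
    rw [this]
    show h₀ (e.symm (e A)) = 0
    rw [e.symm_apply_apply]
    exact hh₀V A hA
  · have hmem : e T₀ ∈ W :=
      Submodule.mem_map_of_mem (Submodule.mem_sup_right (Submodule.subset_span rfl))
    have := hg'ext ⟨e T₀, hmem⟩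
    rw [hGapp]
    rw [show ((⟨e T₀, hmem⟩ : W) : WSpace 𝕜 X) = e T₀ from rfl] at this
    rw [this]
    show h₀ (e.symm (e T₀)) = (d : 𝕜)
    rw [e.symm_apply_apply]
    exact hh₀T₀

end NradAux

set_option maxHeartbeats 1000000 in
open NradAux in
/-- If some best approximation `S ∈ V` to `T` is such that `T − S` is nu-smooth, then
`d_w(T,V)` is the maximum of `x*(Tx)` over extreme points annihilating `V` with
`Im x*(Tx) = 0`. -/
theorem stmt_16 {X : Type*} [NormedAddCommGroup X] [NormedSpace 𝕜 X]
    [NormedSpace ℝ X] [IsScalarTower ℝ 𝕜 X] [FiniteDimensional 𝕜 X]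
    (hw : ∀ T : X →L[𝕜] X, nrad T = 0 → T = 0)
    (T : X →L[𝕜] X) (V : Submodule 𝕜 (X →L[𝕜] X))
    (hbest : ∃ S ∈ V, nrad (T - S) = dw T V ∧ ∃ g, Jw (T - S) = {g}) :
    IsGreatest {r : ℝ | ∃ (x : X) (f : X →L[𝕜] 𝕜),
        x ∈ Set.extremePoints ℝ (Metric.closedBall (0 : X) 1) ∧
        f ∈ Set.extremePoints ℝ (Metric.closedBall (0 : X →L[𝕜] 𝕜) 1) ∧
        ‖f x‖ = 1 ∧ RCLike.im (f (T x)) = 0 ∧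
        (∀ A ∈ V, f (A x) = 0) ∧ r = RCLike.re (f (T x))}
      (dw T V) := by
  classical
  obtain ⟨S, hSV, hSd, g, hg⟩ := hbest
  set T₀ : X →L[𝕜] X := T - S with hT₀def
  have hgJ : g ∈ Jw T₀ := by rw [hg]; rfl
  have hdw_eq : dw T V = sInf {r : ℝ | ∃ S' ∈ V, r = nrad (T - S')} := rfl
  -- `nrad T₀ ≠ 0`
  have hd0 : nrad T₀ ≠ 0 := by
    intro h0
    have hz : T₀ = 0 := hw _ h0
    have hneg : -g ∈ Jw T₀ := by
      refine ⟨by rw [wdual_neg]; exact hgJ.1, ?_⟩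
      rw [hz]
      simp [nrad_zero]
    rw [hg, Set.mem_singleton_iff] at hneg
    have hg0 : g = 0 := by
      ext A
      have h1 : -(g A) = g A := by
        conv_rhs => rw [← hneg]
        simp
      have h2 : (2 : 𝕜) * g A = 0 := by
        rw [two_mul]; nth_rewrite 1 [← h1]; ring
      rcases mul_eq_zero.mp h2 with h3 | h3
      · exact absurd h3 two_ne_zero
      · simpa using h3
    have h1 : wdual g = 1 := hgJ.1
    rw [hg0, wdual_zero] at h1
    exact zero_ne_one h1
  have hX : Nontrivial X := by
    by_contra hcon
    rw [not_nontrivial_iff_subsingleton] at hcon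
    apply hd0
    have hz : T₀ = 0 := by ext u; exact Subsingleton.elim _ _
    rw [hz, nrad_zero]
  have hd : 0 < nrad T₀ := lt_of_le_of_ne (nrad_nonneg T₀) (Ne.symm hd0)
  set d : ℝ := nrad T₀ with hdd
  -- facts about dw
  have hbddBelow : BddBelow {r : ℝ | ∃ S' ∈ V, r = nrad (T - S')} :=
    ⟨0, by rintro r ⟨S', _, rfl⟩; exact nrad_nonneg _⟩
  have hdw_le : ∀ S' ∈ V, dw T V ≤ nrad (T - S') := fun S' hS' =>
    hdw_eq ▸ csInf_le hbddBelow ⟨S', hS', rfl⟩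
  have hlb : ∀ B ∈ V, nrad T₀ ≤ nrad (T₀ - B) := by
    intro B hB
    have he : T₀ - B = T - (S + B) := by rw [hT₀def, sub_sub]
    rw [he, ← hdd, hSd]
    exact hdw_le _ (V.add_mem hSV hB)
  -- the annihilating functional: g kills V
  obtain ⟨G, hGle, hGV, hGT₀⟩ := exists_annihilator hw V T₀ hd hlb
  have hGJ : G ∈ Jw T₀ := by
    constructor
    · apply wdual_eq_one_of
      · exact fun A hA => le_trans (hGle A) hA
      · refine ⟨((d⁻¹ : ℝ) : 𝕜) • T₀, ?_, ?_⟩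
        · rw [nrad_smul, RCLike.norm_ofReal, abs_of_pos (inv_pos.2 hd), ← hdd,
            inv_mul_cancel₀ hd.ne']
        · rw [map_smul, smul_eq_mul, hGT₀, norm_mul, RCLike.norm_ofReal, RCLike.norm_ofReal,
            abs_of_pos (inv_pos.2 hd), ← hdd, abs_of_pos hd, inv_mul_cancel₀ hd.ne']
    · exact hGT₀
  have hgV : ∀ A ∈ V, g A = 0 := by
    intro A hA
    rw [hg, Set.mem_singleton_iff] at hGJ
    rw [← hGJ]
    exact hGV A hA
  -- attainment of the numerical radius of T₀
  obtain ⟨x, xs, hx1, hxs1, hxsx, hatt⟩ := nrad_attained T₀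
  set μ : 𝕜 := xs (T₀ x) with hμ
  have hμnorm : ‖μ‖ = d := hatt
  have hμne : μ ≠ 0 := by
    intro h; rw [h, norm_zero] at hμnorm; exact hd0 hμnorm.symm
  set lam : 𝕜 := ((d : ℝ) : 𝕜) / μ with hlam
  have hlamnorm : ‖lam‖ = 1 := by
    rw [hlam, norm_div, RCLike.norm_ofReal, abs_of_pos hd, hμnorm, div_self hd.ne']
  have hlamne : lam ≠ 0 := by
    intro h; rw [h, norm_zero] at hlamnorm; exact zero_ne_one hlamnorm
  set f : X →L[𝕜] 𝕜 := lam • xs with hf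
  have hfT₀x : f (T₀ x) = ((d : ℝ) : 𝕜) := by
    rw [hf]
    simp only [ContinuousLinearMap.smul_apply, smul_eq_mul]
    rw [← hμ, hlam, div_mul_cancel₀ _ hμne]
  have hfx : f x = lam := by
    rw [hf]
    simp only [ContinuousLinearMap.smul_apply, smul_eq_mul, hxsx, mul_one]
  have hfmem : tensor f x ∈ Jw T₀ := tensor_mem_Jw hx1 hxs1 hxsx hlamnorm hf hd hfT₀x
  have hgt : g = tensor f x := by
    rw [hg, Set.mem_singleton_iff] at hfmem; exact hfmem.symm
  have hfV : ∀ A ∈ V, f (A x) = 0 := by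
    intro A hA
    have h1 : f (A x) = tensor f x A := rfl
    rw [h1, ← hgt]
    exact hgV A hA
  have hfTx : f (T x) = ((d : ℝ) : 𝕜) := by
    have he : T x = T₀ x + S x := by
      rw [hT₀def, ContinuousLinearMap.sub_apply, sub_add_cancel]
    rw [he, map_add, hfT₀x, hfV S hSV, add_zero]
  have hfnorm : ‖f‖ = 1 := by
    have h1 : ‖f‖ = ‖lam‖ * ‖xs‖ := by rw [hf]; exact norm_smul lam xs
    rw [h1, hlamnorm, hxs1, mul_one]
  -- a helper: pairs adapted to T₀ give elements of Jw, hence equal g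
  have hJw_of_pair : ∀ (y : X) (ys : X →L[𝕜] 𝕜), ‖y‖ = 1 → ‖ys‖ = 1 → ys y = 1 →
      ∀ fy : X →L[𝕜] 𝕜, fy = lam • ys → fy (T₀ y) = ((d : ℝ) : 𝕜) →
      tensor fy y = g := by
    intro y ys hy hys hysy fy hfy hval
    have := tensor_mem_Jw hy hys hysy hlamnorm hfy hd hval
    rw [hg, Set.mem_singleton_iff] at this
    exact this
  constructor
  · -- membership
    refine ⟨x, f, ?_, ?_, by rw [hfx]; exact hlamnorm, by rw [hfTx]; exact RCLike.ofReal_im d,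
      hfV, by rw [hfTx, RCLike.ofReal_re]; exact hSd.symm⟩
    · -- x is an extreme point
      refine ⟨mem_closedBall_zero_iff.2 hx1.le, ?_⟩
      intro x1 hx1mem x2 hx2mem hseg
      obtain ⟨a, b, ha, hb, hab, hxe⟩ := hseg
      rw [mem_closedBall_zero_iff] at hx1mem hx2mem
      have hsmul : ∀ (t : ℝ) (u : X) (φ : X →L[𝕜] 𝕜), φ (t • u) = (t : 𝕜) * φ u := by
        intro t u φ
        rw [RCLike.real_smul_eq_coe_smul (K := 𝕜), map_smul, smul_eq_mul]
      have heq1 : (a : 𝕜) * xs x1 + (b : 𝕜) * xs x2 = ((1 : ℝ) : 𝕜) := by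
        rw [← hsmul, ← hsmul, ← map_add, hxe, hxsx, RCLike.ofReal_one]
      have hu1 : ‖xs x1‖ ≤ 1 := by
        calc ‖xs x1‖ ≤ ‖xs‖ * ‖x1‖ := xs.le_opNorm _
          _ ≤ 1 := by rw [hxs1, one_mul]; exact hx1mem
      have hu2 : ‖xs x2‖ ≤ 1 := by
        calc ‖xs x2‖ ≤ ‖xs‖ * ‖x2‖ := xs.le_opNorm _
          _ ≤ 1 := by rw [hxs1, one_mul]; exact hx2mem
      obtain ⟨hv1, hv2⟩ := disc_extreme ha hb hab hu1 hu2 heq1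
      rw [RCLike.ofReal_one] at hv1 hv2
      have hn1 : ‖x1‖ = 1 := by
        refine le_antisymm hx1mem ?_
        have : (1 : ℝ) = ‖xs x1‖ := by rw [hv1, norm_one]
        rw [this]
        calc ‖xs x1‖ ≤ ‖xs‖ * ‖x1‖ := xs.le_opNorm _
          _ = ‖x1‖ := by rw [hxs1, one_mul]
      have hn2 : ‖x2‖ = 1 := by
        refine le_antisymm hx2mem ?_
        have : (1 : ℝ) = ‖xs x2‖ := by rw [hv2, norm_one]
        rw [this]
        calc ‖xs x2‖ ≤ ‖xs‖ * ‖x2‖ := xs.le_opNorm _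
          _ = ‖x2‖ := by rw [hxs1, one_mul]
      have heq2 : (a : 𝕜) * f (T₀ x1) + (b : 𝕜) * f (T₀ x2) = ((d : ℝ) : 𝕜) := by
        have hT : T₀ x = a • T₀ x1 + b • T₀ x2 := by rw [← hxe]; simp [map_add]
        rw [← hsmul, ← hsmul, ← map_add, ← hT, hfT₀x]
      have hw1 : ‖f (T₀ x1)‖ ≤ d := by
        have : ‖f (T₀ x1)‖ = ‖xs (T₀ x1)‖ := by
          rw [hf]; simp [norm_smul, hlamnorm]
        rw [this, hdd]
        exact pair_le_nrad hn1 hxs1 hv1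
      have hw2 : ‖f (T₀ x2)‖ ≤ d := by
        have : ‖f (T₀ x2)‖ = ‖xs (T₀ x2)‖ := by
          rw [hf]; simp [norm_smul, hlamnorm]
        rw [this, hdd]
        exact pair_le_nrad hn2 hxs1 hv2
      obtain ⟨hd1, hd2⟩ := disc_extreme ha hb hab hw1 hw2 heq2
      have ht1 : tensor f x1 = g := hJw_of_pair x1 xs hn1 hxs1 hv1 f hf hd1
      have ht2 : tensor f x2 = g := hJw_of_pair x2 xs hn2 hxs1 hv2 f hf hd2
      have hx12 : x1 = x2 := by
        by_contra hne
        have hz : x1 - x2 ≠ 0 := sub_ne_zero.2 hne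
        obtain ⟨ψ, hψ1, hψz⟩ := exists_dual_vector 𝕜 (x1 - x2) (norm_ne_zero_iff.2 hz)
        set A : X →L[𝕜] X := ψ.smulRight x with hA
        have happ : ∀ u : X, f (A u) = ψ u * lam := by
          intro u
          rw [hA, ContinuousLinearMap.smulRight_apply, map_smul, smul_eq_mul, hfx]
        have heqA : f (A x1) = f (A x2) := by
          have : tensor f x1 A = tensor f x2 A := by rw [ht1, ht2]
          exact this
        rw [happ, happ] at heqA
        have : (ψ x1 - ψ x2) * lam = 0 := by rw [sub_mul, heqA, sub_self]
        rcases mul_eq_zero.mp this with h | h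
        · rw [← map_sub] at h
          rw [h] at hψz
          have : ‖x1 - x2‖ = 0 := by
            have := hψz.symm
            rwa [RCLike.ofReal_eq_zero] at this
          exact hz (norm_eq_zero.mp this)
        · exact hlamne h
      have hx1x : x1 = x := by
        rw [← hxe, ← hx12, Convex.combo_self hab]
      exact hx1x
    · -- f is an extreme point
      refine ⟨mem_closedBall_zero_iff.2 hfnorm.le, ?_⟩
      intro f1 hf1mem f2 hf2mem hseg
      obtain ⟨a, b, ha, hb, hab, hfe⟩ := hseg
      rw [mem_closedBall_zero_iff] at hf1mem hf2mem
      have happR : ∀ (t : ℝ) (φ : X →L[𝕜] 𝕜) (u : X), (t • φ) u = (t : 𝕜) * φ u := by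
        intro t φ u
        rw [ContinuousLinearMap.smul_apply, RCLike.real_smul_eq_coe_mul]
      set cl : 𝕜 := (starRingEnd 𝕜) lam with hcl
      have hcl_lam : cl * lam = 1 := by
        rw [hcl, RCLike.conj_mul, hlamnorm]
        norm_num
      have hlam_cl : lam * cl = 1 := by rw [mul_comm]; exact hcl_lam
      have heq1 : (a : 𝕜) * (cl * f1 x) + (b : 𝕜) * (cl * f2 x) = ((1 : ℝ) : 𝕜) := by
        have h0 : (a : 𝕜) * f1 x + (b : 𝕜) * f2 x = lam := by
          rw [← happR, ← happR, ← ContinuousLinearMap.add_apply, hfe, hfx]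
        calc (a : 𝕜) * (cl * f1 x) + (b : 𝕜) * (cl * f2 x)
            = cl * ((a : 𝕜) * f1 x + (b : 𝕜) * f2 x) := by ring
          _ = cl * lam := by rw [h0]
          _ = ((1 : ℝ) : 𝕜) := by rw [hcl_lam, RCLike.ofReal_one]
      have hbd : ∀ φ : X →L[𝕜] 𝕜, ‖φ‖ ≤ 1 → ‖cl * φ x‖ ≤ 1 := by
        intro φ hφ
        rw [norm_mul, hcl, RCLike.norm_conj, hlamnorm, one_mul]
        calc ‖φ x‖ ≤ ‖φ‖ * ‖x‖ := φ.le_opNorm _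
          _ ≤ 1 := by rw [hx1, mul_one]; exact hφ
      obtain ⟨hv1, hv2⟩ := disc_extreme ha hb hab (hbd f1 hf1mem) (hbd f2 hf2mem) heq1
      rw [RCLike.ofReal_one] at hv1 hv2
      set xs1 : X →L[𝕜] 𝕜 := cl • f1 with hxs1'
      set xs2 : X →L[𝕜] 𝕜 := cl • f2 with hxs2'
      have hxs1x : xs1 x = 1 := by
        rw [hxs1', ContinuousLinearMap.smul_apply, smul_eq_mul]; exact hv1
      have hxs2x : xs2 x = 1 := by
        rw [hxs2', ContinuousLinearMap.smul_apply, smul_eq_mul]; exact hv2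
      have hxs1n : ‖xs1‖ = 1 := by
        refine le_antisymm ?_ ?_
        · have h1 : ‖xs1‖ = ‖cl‖ * ‖f1‖ := by rw [hxs1']; exact norm_smul cl f1
          rw [h1, hcl, RCLike.norm_conj, hlamnorm, one_mul]; exact hf1mem
        · have : (1 : ℝ) = ‖xs1 x‖ := by rw [hxs1x, norm_one]
          rw [this]
          calc ‖xs1 x‖ ≤ ‖xs1‖ * ‖x‖ := xs1.le_opNorm _
            _ = ‖xs1‖ := by rw [hx1, mul_one]
      have hxs2n : ‖xs2‖ = 1 := by
        refine le_antisymm ?_ ?_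
        · have h1 : ‖xs2‖ = ‖cl‖ * ‖f2‖ := by rw [hxs2']; exact norm_smul cl f2
          rw [h1, hcl, RCLike.norm_conj, hlamnorm, one_mul]; exact hf2mem
        · have : (1 : ℝ) = ‖xs2 x‖ := by rw [hxs2x, norm_one]
          rw [this]
          calc ‖xs2 x‖ ≤ ‖xs2‖ * ‖x‖ := xs2.le_opNorm _
            _ = ‖xs2‖ := by rw [hx1, mul_one]
      have hf1eq : f1 = lam • xs1 := by
        rw [hxs1', smul_smul, hlam_cl, one_smul]
      have hf2eq : f2 = lam • xs2 := by
        rw [hxs2', smul_smul, hlam_cl, one_smul]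
      have heq2 : (a : 𝕜) * f1 (T₀ x) + (b : 𝕜) * f2 (T₀ x) = ((d : ℝ) : 𝕜) := by
        rw [← happR, ← happR, ← ContinuousLinearMap.add_apply, hfe, hfT₀x]
      have hw1 : ‖f1 (T₀ x)‖ ≤ d := by
        have : ‖f1 (T₀ x)‖ = ‖xs1 (T₀ x)‖ := by
          rw [hf1eq]; simp [norm_smul, hlamnorm]
        rw [this, hdd]
        exact pair_le_nrad hx1 hxs1n hxs1x
      have hw2 : ‖f2 (T₀ x)‖ ≤ d := by
        have : ‖f2 (T₀ x)‖ = ‖xs2 (T₀ x)‖ := by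
          rw [hf2eq]; simp [norm_smul, hlamnorm]
        rw [this, hdd]
        exact pair_le_nrad hx1 hxs2n hxs2x
      obtain ⟨hd1, hd2⟩ := disc_extreme ha hb hab hw1 hw2 heq2
      have ht1 : tensor f1 x = g := hJw_of_pair x xs1 hx1 hxs1n hxs1x f1 hf1eq hd1
      have ht2 : tensor f2 x = g := hJw_of_pair x xs2 hx1 hxs2n hxs2x f2 hf2eq hd2
      have hf12 : f1 = f2 := by
        have hxne : x ≠ 0 := by
          intro h; rw [h, norm_zero] at hx1; exact zero_ne_one hx1
        obtain ⟨ψ, hψ1, hψx⟩ := exists_dual_vector 𝕜 x (norm_ne_zero_iff.2 hxne)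
        ext z
        set A : X →L[𝕜] X := ψ.smulRight z with hA
        have hAx : A x = z := by
          rw [hA, ContinuousLinearMap.smulRight_apply, hψx, hx1, RCLike.ofReal_one, one_smul]
        have : tensor f1 x A = tensor f2 x A := by rw [ht1, ht2]
        have h2 : f1 (A x) = f2 (A x) := this
        rwa [hAx] at h2
      have hf1f : f1 = f := by
        have hcombo := Convex.combo_self hab f1
        rw [← hfe, ← hf12]
        exact hcombo.symm
      exact hf1f
  · -- upper bound
    rintro r ⟨x', f', hx'ext, hf'ext, hfx'1, _him, hann, rfl⟩
    have hx'le : ‖x'‖ ≤ 1 := mem_closedBall_zero_iff.1 hx'ext.1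
    have hf'le : ‖f'‖ ≤ 1 := mem_closedBall_zero_iff.1 hf'ext.1
    have h1 : (1 : ℝ) ≤ ‖f'‖ * ‖x'‖ := by
      rw [← hfx'1]; exact f'.le_opNorm x'
    have hx'ge : (1 : ℝ) ≤ ‖x'‖ := by
      refine le_trans h1 ?_
      calc ‖f'‖ * ‖x'‖ ≤ 1 * ‖x'‖ := mul_le_mul_of_nonneg_right hf'le (norm_nonneg _)
        _ = ‖x'‖ := one_mul _
    have hx'1 : ‖x'‖ = 1 := le_antisymm hx'le hx'ge
    have hf'1 : ‖f'‖ = 1 := by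
      refine le_antisymm hf'le ?_
      refine le_trans h1 ?_
      rw [hx'1, mul_one]
    set ν : 𝕜 := f' x' with hν
    have hνn : ‖ν‖ = 1 := hfx'1
    set f'' : X →L[𝕜] 𝕜 := (starRingEnd 𝕜) ν • f' with hf''
    have hf''x : f'' x' = 1 := by
      rw [hf'', ContinuousLinearMap.smul_apply, smul_eq_mul, ← hν, RCLike.conj_mul, hνn]
      norm_num
    have hf''n : ‖f''‖ = 1 := by
      have h2 : ‖f''‖ = ‖(starRingEnd 𝕜) ν‖ * ‖f'‖ := by rw [hf'']; exact norm_smul ((starRingEnd 𝕜) ν) f'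
      rw [h2, RCLike.norm_conj, hνn, one_mul, hf'1]
    rw [hdw_eq]
    refine le_csInf ⟨nrad (T - S), S, hSV, rfl⟩ ?_
    rintro b ⟨S', hS', rfl⟩
    have hkey : f' (T x') = f' ((T - S') x') := by
      rw [ContinuousLinearMap.sub_apply, map_sub, hann S' hS', sub_zero]
    calc RCLike.re (f' (T x')) ≤ ‖f' (T x')‖ := RCLike.re_le_norm _
      _ = ‖f'' ((T - S') x')‖ := by
          rw [hkey, hf'', ContinuousLinearMap.smul_apply, smul_eq_mul, norm_mul,
            RCLike.norm_conj, hνn, one_mul]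
      _ ≤ nrad (T - S') := pair_le_nrad hx'1 hf''n hf''x
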